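/- Let $G$ be a cyclic group of order $8$ with generator $s$, let $\epsilon = s^4$, and let $H = \{1, \epsilon\}$. Let $k$ be a field of characteristic $\neq 2$ not containing a primitive 4th root of unity, let $A = k[X]/(X^4+1)$ (a field, assuming $X^4+1$ is irreducible over $k$), and let $i_A : G \to A^{\times}$ be the homomorphism sending $s$ to the class $x$ of $X$. Let $F^{\times 1} = \{u \in A^\times : u\sigma(u) = 1\}$ where $\sigma(x) = x^{-1}$, and let $V = \{(u, h) \in F^{\times 1} \times H : u^2 = i_A(h)\}$. Then $V = \{(1,1), (-1,1), (x^2, \epsilon), (-x^2, \epsilon)\}$ and $V$ is cyclic of order $4$; in particular the central extension $1 \to \{\pm 1\} \to V \to H \to 1$ does not split. -/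

import Mathlib

open Polynomial

/-- For `G` cyclic of order 8 with `ε` its element of order 2 and `H = {1, ε}` (realized as
`ℤ/2ℤ` with `ε` the non-identity element), `A = k[X]/(X⁴+1)` a field with involution
`σ(x) = x⁻¹`, and `i_A(ε) = x⁴ = -1`, the group
`V = {(u,h) ∈ F^{×1} × H : u² = i_A(h)}` equals `{(1,1), (-1,1), (x²,ε), (-x²,ε)}`,
is cyclic of order 4, and the central extension `1 → {±1} → V → H → 1` does not split. -/
theorem stmt18 {k : Type*} [Field k] (h2 : (2 : k) ≠ 0)
    (hirr : Irreducible (X ^ 4 + 1 : k[X]))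
    (σ : AdjoinRoot (X ^ 4 + 1 : k[X]) →ₐ[k] AdjoinRoot (X ^ 4 + 1 : k[X]))
    (hσ : σ (AdjoinRoot.root (X ^ 4 + 1 : k[X])) =
      -(AdjoinRoot.root (X ^ 4 + 1 : k[X])) ^ 3)
    (W : Subgroup ((AdjoinRoot (X ^ 4 + 1 : k[X]))ˣ × Multiplicative (ZMod 2)))
    (hW : ∀ p : (AdjoinRoot (X ^ 4 + 1 : k[X]))ˣ × Multiplicative (ZMod 2),
      p ∈ W ↔ ((p.1 : AdjoinRoot (X ^ 4 + 1 : k[X])) * σ (p.1 : AdjoinRoot (X ^ 4 + 1 : k[X])) = 1 ∧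
        (p.1 : AdjoinRoot (X ^ 4 + 1 : k[X])) ^ 2 = (if p.2 = 1 then 1 else -1))) :
    (∀ p : (AdjoinRoot (X ^ 4 + 1 : k[X]))ˣ × Multiplicative (ZMod 2),
      p ∈ W ↔ (((p.1 : AdjoinRoot (X ^ 4 + 1 : k[X])) = 1 ∨
                 (p.1 : AdjoinRoot (X ^ 4 + 1 : k[X])) = -1) ∧ p.2 = 1) ∨
        (((p.1 : AdjoinRoot (X ^ 4 + 1 : k[X])) = (AdjoinRoot.root (X ^ 4 + 1 : k[X])) ^ 2 ∨
          (p.1 : AdjoinRoot (X ^ 4 + 1 : k[X])) = -(AdjoinRoot.root (X ^ 4 + 1 : k[X])) ^ 2) ∧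
          p.2 = Multiplicative.ofAdd (1 : ZMod 2))) ∧
    IsCyclic W ∧ Nat.card W = 4 ∧
    ¬ ∃ s : Multiplicative (ZMod 2) →* W, ∀ h : Multiplicative (ZMod 2),
        ((s h : W) : (AdjoinRoot (X ^ 4 + 1 : k[X]))ˣ × Multiplicative (ZMod 2)).2 = h := by
  haveI : Fact (Irreducible (X ^ 4 + 1 : k[X])) := ⟨hirr⟩
  set A := AdjoinRoot (X ^ 4 + 1 : k[X]) with hA
  set r : A := AdjoinRoot.root (X ^ 4 + 1 : k[X]) with hrdef
  -- basic facts
  have hr4 : r ^ 4 = -1 := by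
    have h := AdjoinRoot.eval₂_root (X ^ 4 + 1 : k[X])
    simp only [eval₂_add, eval₂_pow, eval₂_X, eval₂_one] at h
    linear_combination h
  have h2A : (2 : A) ≠ 0 := by
    intro h
    have hm : (algebraMap k A) 2 = (algebraMap k A) 0 := by rw [map_ofNat, map_zero]; exact h
    exact h2 ((algebraMap k A).injective hm)
  have hne : (-1 : A) ≠ 1 := by
    intro h; apply h2A; linear_combination -h
  have hr8 : r ^ 2 * r ^ 6 = 1 := by linear_combination (r ^ 4 - 1) * hr4
  have hσ2 : σ (r ^ 2) = r ^ 6 := by rw [map_pow, hσ]; ring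
  have hsq1 : ∀ u : A, u ^ 2 = 1 → u = 1 ∨ u = -1 := by
    intro u hu
    have h0 : (u - 1) * (u + 1) = 0 := by linear_combination hu
    rcases mul_eq_zero.mp h0 with h | h
    · left; linear_combination h
    · right; linear_combination h
  have hsqm1 : ∀ u : A, u ^ 2 = -1 → u = r ^ 2 ∨ u = -r ^ 2 := by
    intro u hu
    have h0 : (u - r ^ 2) * (u + r ^ 2) = 0 := by linear_combination hu - hr4
    rcases mul_eq_zero.mp h0 with h | h
    · left; linear_combination h
    · right; linear_combination h
  have hzm : ∀ h : Multiplicative (ZMod 2), h = 1 ∨ h = Multiplicative.ofAdd 1 := by decide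
  have hofne : (Multiplicative.ofAdd (1 : ZMod 2)) ≠ 1 := by decide
  -- the description of W
  have mem_iff : ∀ p : Aˣ × Multiplicative (ZMod 2),
      p ∈ W ↔ (((p.1 : A) = 1 ∨ (p.1 : A) = -1) ∧ p.2 = 1) ∨
        (((p.1 : A) = r ^ 2 ∨ (p.1 : A) = -r ^ 2) ∧ p.2 = Multiplicative.ofAdd 1) := by
    intro p
    rw [hW]
    rcases hzm p.2 with h | h
    · rw [h, if_pos rfl]
      constructor
      · rintro ⟨-, hsq⟩
        exact Or.inl ⟨hsq1 _ hsq, rfl⟩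
      · rintro (⟨h1 | h1, -⟩ | ⟨-, hbad⟩)
        · rw [h1]; constructor <;> simp
        · refine ⟨?_, ?_⟩
          · rw [h1, map_neg, map_one]; ring
          · rw [h1]; ring
        · exact absurd hbad (by decide)
    · rw [h, if_neg hofne]
      constructor
      · rintro ⟨-, hsq⟩
        exact Or.inr ⟨hsqm1 _ hsq, rfl⟩
      · rintro (⟨-, hbad⟩ | ⟨h1 | h1, -⟩)
        · exact absurd hbad (by decide)
        · refine ⟨?_, ?_⟩
          · rw [h1, hσ2]; exact hr8
          · rw [h1, ← pow_mul]; exact hr4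
        · refine ⟨?_, ?_⟩
          · rw [h1, map_neg, hσ2]; linear_combination hr8
          · rw [h1]; linear_combination hr4
  refine ⟨mem_iff, ?_⟩
  -- the generator
  set ug : Aˣ := ⟨r ^ 2, r ^ 6, hr8, by linear_combination hr8⟩ with hug
  set g : Aˣ × Multiplicative (ZMod 2) := (ug, Multiplicative.ofAdd 1) with hg
  have hgW : g ∈ W := by
    rw [mem_iff]
    exact Or.inr ⟨Or.inl rfl, rfl⟩
  have hg2ne : g ^ 2 ≠ 1 := by
    intro h
    have h1 : ((g ^ 2).1 : A) = 1 := by rw [h]; rfl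
    rw [Prod.pow_fst, Units.val_pow_eq_pow_val] at h1
    apply hne
    calc (-1 : A) = ((ug : A)) ^ 2 := by show (-1 : A) = (r ^ 2) ^ 2; linear_combination -hr4
    _ = 1 := h1
  have hg4 : g ^ 4 = 1 := by
    refine Prod.ext ?_ ?_
    · apply Units.ext
      rw [Prod.pow_fst, Units.val_pow_eq_pow_val]
      show (r ^ 2) ^ 4 = ((1 : Aˣ) : A)
      rw [Units.val_one]
      linear_combination (r ^ 4 - 1) * hr4
    · rw [Prod.pow_snd]
      show (Multiplicative.ofAdd (1 : ZMod 2)) ^ 4 = 1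
      decide
  have hog : orderOf g = 4 := by
    have := orderOf_eq_prime_pow (p := 2) (n := 1) (x := g) (by simpa using hg2ne)
      (by simpa using hg4)
    simpa using this
  have hWz : W = Subgroup.zpowers g := by
    apply le_antisymm
    · intro p hp
      rw [mem_iff] at hp
      rw [Subgroup.mem_zpowers_iff]
      have key : ∀ n : ℕ, g ^ n = p → ∃ m : ℤ, g ^ m = p := fun n hn =>
        ⟨(n : ℤ), by rw [zpow_natCast]; exact hn⟩
      rcases hp with ⟨h1 | h1, h2'⟩ | ⟨h1 | h1, h2'⟩
      · refine key 0 (Prod.ext (Units.ext ?_) ?_)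
        · rw [Prod.pow_fst, Units.val_pow_eq_pow_val, h1]
          show ((r ^ 2) ^ 0 : A) = 1; rw [pow_zero]
        · rw [Prod.pow_snd, h2']
          show (Multiplicative.ofAdd (1 : ZMod 2)) ^ 0 = 1
          decide
      · refine key 2 (Prod.ext (Units.ext ?_) ?_)
        · rw [Prod.pow_fst, Units.val_pow_eq_pow_val, h1]
          show ((r ^ 2) ^ 2 : A) = -1; linear_combination hr4
        · rw [Prod.pow_snd, h2']
          show (Multiplicative.ofAdd (1 : ZMod 2)) ^ 2 = 1
          decide
      · refine key 1 (Prod.ext (Units.ext ?_) ?_)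
        · rw [Prod.pow_fst, Units.val_pow_eq_pow_val, h1]
          show ((r ^ 2) ^ 1 : A) = r ^ 2; rw [pow_one]
        · rw [Prod.pow_snd, h2']
          show (Multiplicative.ofAdd (1 : ZMod 2)) ^ 1 = Multiplicative.ofAdd (1 : ZMod 2)
          decide
      · refine key 3 (Prod.ext (Units.ext ?_) ?_)
        · rw [Prod.pow_fst, Units.val_pow_eq_pow_val, h1]
          show ((r ^ 2) ^ 3 : A) = -r ^ 2; linear_combination (r ^ 2) * hr4
        · rw [Prod.pow_snd, h2']
          show (Multiplicative.ofAdd (1 : ZMod 2)) ^ 3 = Multiplicative.ofAdd (1 : ZMod 2)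
          decide
    · rw [Subgroup.zpowers_le]; exact hgW
  have hcard : Nat.card W = 4 := by
    have hc := congrArg (fun S : Subgroup (Aˣ × Multiplicative (ZMod 2)) => Nat.card S) hWz
    rw [hc, Nat.card_zpowers, hog]
  refine ⟨?_, hcard, ?_⟩
  · -- cyclic
    have hord : orderOf (⟨g, hgW⟩ : W) = 4 :=
      (orderOf_injective W.subtype Subtype.coe_injective ⟨g, hgW⟩).symm.trans hog
    haveI : Finite W := Nat.finite_of_card_ne_zero (by rw [hcard]; norm_num)
    exact isCyclic_of_orderOf_eq_card _ (by rw [hord, hcard])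
  · -- non-splitting
    rintro ⟨s, hs⟩
    set w := s (Multiplicative.ofAdd 1) with hw
    have hw2 : w ^ 2 = 1 := by
      have he : (Multiplicative.ofAdd (1 : ZMod 2)) ^ 2 = 1 := by decide
      rw [hw, ← map_pow, he]
      exact map_one s
    have hval : ((w : Aˣ × Multiplicative (ZMod 2))) ^ 2 = 1 := by
      rw [← SubmonoidClass.coe_pow, hw2]; rfl
    have hfst := congrArg Prod.fst hval
    rw [Prod.pow_fst] at hfst
    have hfst' : ((w : Aˣ × Multiplicative (ZMod 2)).1) ^ 2 = (1 : Aˣ) := hfst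
    have hsq1' : (((w : Aˣ × Multiplicative (ZMod 2)).1 : Aˣ) : A) ^ 2 = 1 := by
      rw [← Units.val_pow_eq_pow_val, hfst', Units.val_one]
    have hwmem := w.2
    rw [hW] at hwmem
    have h2nd : ((w : Aˣ × Multiplicative (ZMod 2))).2 = Multiplicative.ofAdd 1 :=
      hs (Multiplicative.ofAdd 1)
    rw [h2nd, if_neg hofne] at hwmem
    have hsqm : (((w : Aˣ × Multiplicative (ZMod 2)).1 : Aˣ) : A) ^ 2 = -1 := hwmem.2
    rw [hsq1'] at hsqm
    exact hne hsqm.symm
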